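/- The 6×6 complex matrix Q (given below, with parameter ρ ∈ ℂ, ρ ≠ ±1) has characteristic polynomial ((λ² + 2ρλ + 1))³, hence exactly two eigenvalues λ_{1,2} = −ρ ± √(ρ²−1), each with algebraic multiplicity 3, and λ₁λ₂ = 1. -/

import Mathlib

open Polynomial Complex

/-- The first-order evolution matrix `Q` of the asymptotic difference system. -/
noncomputable def Qmat (ρ : ℂ) : Matrix (Fin 6) (Fin 6) ℂ :=
  !![-2*ρ, 0, 0, 1, 0, 0;
     -2*Complex.I*ρ, -2*ρ, 0, 2*Complex.I, 1, 0;
     9+ρ, 2*Complex.I*ρ, -2*ρ, -2, 2*Complex.I, 1;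
     -1, 0, 0, 0, 0, 0;
     0, -1, 0, 0, 0, 0;
     0, 0, -1, 0, 0, 0]

set_option maxHeartbeats 2000000 in
set_option maxRecDepth 100000 in
lemma charpoly_Qmat_aux (ρ : ℂ) :
    (Qmat ρ).charpoly = (X ^ 2 + C (2 * ρ) * X + 1) ^ 3 := by
  rw [Matrix.charpoly]
  simp (config := { decide := true }) [Matrix.charmatrix, Qmat, Matrix.det_succ_row_zero,
    Fin.sum_univ_succ, Matrix.submatrix, Fin.succAbove, Matrix.diagonal_apply,
    Fin.castSucc, Fin.castAdd, Fin.castLE]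
  ring

theorem charpoly_Qmat (ρ s : ℂ) (hρ1 : ρ ≠ 1) (hρ2 : ρ ≠ -1) (hs : s ^ 2 = ρ ^ 2 - 1) :
    (Qmat ρ).charpoly = ((X - C (-ρ + s)) * (X - C (-ρ - s))) ^ 3 ∧
    (Qmat ρ).charpoly = (X ^ 2 + C (2 * ρ) * X + 1) ^ 3 ∧
    (-ρ + s) * (-ρ - s) = 1 ∧ (-ρ + s) ≠ (-ρ - s) := by
  have hprod : (-ρ + s) * (-ρ - s) = 1 := by linear_combination -hs
  have hfac : ((X - C (-ρ + s)) * (X - C (-ρ - s))) = X ^ 2 + C (2 * ρ) * X + 1 := by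
    have : (X - C (-ρ + s)) * (X - C (-ρ - s)) =
        X ^ 2 + C (2 * ρ) * X + C ((-ρ + s) * (-ρ - s)) := by
      simp only [map_mul, map_add, map_neg, map_sub, map_ofNat]
      ring
    rw [this, hprod, map_one]
  have hs0 : s ≠ 0 := by
    intro h
    rw [h] at hs
    have : (ρ - 1) * (ρ + 1) = 0 := by linear_combination -hs
    rcases mul_eq_zero.mp this with h' | h'
    · exact hρ1 (by linear_combination h')
    · exact hρ2 (by linear_combination h')
  refine ⟨?_, charpoly_Qmat_aux ρ, hprod, ?_⟩
  · rw [charpoly_Qmat_aux ρ, hfac]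
  · intro h
    apply hs0
    have : (2 : ℂ) * s = 0 := by linear_combination h
    simpa using this
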